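/- Let X be a real Hilbert space, let D be a nonempty subset of X, let T : D → X, let α > 0, and set A = T⁻¹ − Id (so that T = J_A). Then T is α-conically nonexpansive if and only if A is (1/(2α) − 1)-comonotone. -/
import Mathlib


open RealInnerProductSpace

variable {X : Type*} [NormedAddCommGroup X] [InnerProductSpace ℝ X] [CompleteSpace X]

/-- `A` is `ρ`-comonotone. -/
def Comonotone (ρ : ℝ) (A : X → Set X) : Prop :=
  ∀ ⦃x u y v : X⦄, u ∈ A x → v ∈ A y → ρ * ‖u - v‖ ^ 2 ≤ ⟪x - y, u - v⟫

/-- The operator `A = T⁻¹ - Id` for `T : D → X`; its graph is `{(T x, x - T x) : x ∈ D}`. -/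
def invMinusId (D : Set X) (T : X → X) : X → Set X :=
  fun w => {u | ∃ x ∈ D, T x = w ∧ u = x - T x}

/-- `T` is `α`-conically nonexpansive on `D`: on `D`, `T = (1 - α) Id + α N` for some
operator `N` which is nonexpansive on `D`. -/
def ConNonexpOn (D : Set X) (α : ℝ) (T : X → X) : Prop :=
  ∃ N : X → X, (∀ x ∈ D, ∀ y ∈ D, ‖N x - N y‖ ≤ ‖x - y‖) ∧
    ∀ x ∈ D, T x = (1 - α) • x + α • N x

lemma key_aux (α : ℝ) (hα : α ≠ 0) (p r : X) :
    ⟪(1-α)•p + α•r, p - ((1-α)•p + α•r)⟫ - (1/(2*α)-1) * ‖p - ((1-α)•p + α•r)‖^2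
      = (α/2) * (‖p‖^2 - ‖r‖^2) := by
  have h : p - ((1-α)•p + α•r) = α • (p - r) := by module
  rw [h, norm_smul]
  simp only [inner_smul_right, inner_add_left, inner_smul_left, inner_sub_right,
    real_inner_self_eq_norm_sq, RCLike.conj_to_real, Real.norm_eq_abs]
  have h2 : |α|^2 = α^2 := sq_abs α
  have h3 : ⟪r, p⟫ = ⟪p, r⟫ := real_inner_comm p r
  have h4 : ‖p - r‖^2 = ‖p‖^2 - 2*⟪p,r⟫ + ‖r‖^2 := by
    rw [norm_sub_sq_real]
  rw [mul_pow, h2, h4, h3]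
  field_simp
  ring

theorem stmt10 (D : Set X) (hD : D.Nonempty) (T : X → X) (α : ℝ) (hα : 0 < α) :
    ConNonexpOn D α T ↔ Comonotone (1 / (2 * α) - 1) (invMinusId D T) := by
  have hα' : α ≠ 0 := ne_of_gt hα
  constructor
  · rintro ⟨N, hN, hT⟩ w₁ u w₂ v ⟨x, hx, hTx, hu⟩ ⟨y, hy, hTy, hv⟩
    subst hTx hTy hu hv
    set p := x - y with hp
    set r := N x - N y with hr
    have hq : T x - T y = (1-α)•p + α•r := by
      rw [hT x hx, hT y hy, hp, hr]; module
    have hpq : (x - T x) - (y - T y) = p - ((1-α)•p + α•r) := by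
      rw [← hq, hp]; abel
    have hkey := key_aux α hα' p r
    have hrle : ‖r‖ ≤ ‖p‖ := hN x hx y hy
    have hsq : ‖r‖^2 ≤ ‖p‖^2 := by nlinarith [norm_nonneg r, norm_nonneg p]
    rw [hpq, hq]
    nlinarith [hkey]
  · intro hA
    refine ⟨fun x => (1 - 1/α) • x + (1/α) • T x, ?_, ?_⟩
    · intro x hx y hy
      have hmem₁ : (x - T x) ∈ invMinusId D T (T x) := ⟨x, hx, rfl, rfl⟩
      have hmem₂ : (y - T y) ∈ invMinusId D T (T y) := ⟨y, hy, rfl, rfl⟩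
      have h := hA hmem₁ hmem₂
      set p := x - y with hp
      set r := ((1 - 1/α) • x + (1/α) • T x) - ((1 - 1/α) • y + (1/α) • T y) with hr
      have hq : T x - T y = (1-α)•p + α•r := by
        rw [hr, hp]
        rw [smul_sub, smul_sub, smul_add, smul_add, smul_smul, smul_smul, smul_smul, smul_smul]
        field_simp
        module
      have hpq : (x - T x) - (y - T y) = p - ((1-α)•p + α•r) := by
        rw [← hq, hp]; abel
      have hkey := key_aux α hα' p r
      rw [hpq, hq] at h
      have hsq : ‖r‖^2 ≤ ‖p‖^2 := by nlinarith [hkey]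
      nlinarith [norm_nonneg r, norm_nonneg p]
    · intro x hx
      rw [smul_add, smul_smul, smul_smul]
      field_simp
      module
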